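/- Let n ≥ 2 be an integer, let b be a nonzero algebraic integer, and let w be a periodic point of g_b of period h ≥ 1 whose multiplier μ = ∏_{j=0}^{h-1} (g_b^{∘j}(w))^{n-1} is a primitive m-th root of unity. Set r = h·m and let d̂ be the degree of the minimal polynomial of b^{n-1} over ℤ. Then the constant coefficient of the minimal polynomial of b^{n-1} over ℤ divides (n^r − 1)^{(n-1)·d̂} in ℤ; equivalently, Norm(b^{n-1}) divides (n^r − 1)^{(n-1)·d̂}. -/

import Mathlib

open Polynomial
set_option maxHeartbeats 1000000
set_option synthInstance.maxHeartbeats 1000000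


private noncomputable def rev (P : Polynomial ℤ) (C : ℤ) : Polynomial ℤ :=
  ∑ i ∈ Finset.range (P.natDegree + 1),
    Polynomial.C (P.coeff i * C ^ i) * Polynomial.X ^ (P.natDegree - i)

private lemma rev_coeff_zero (P : Polynomial ℤ) (C : ℤ) :
    (rev P C).coeff 0 = P.coeff P.natDegree * C ^ P.natDegree := by
  rw [rev, Polynomial.finset_sum_coeff]
  rw [Finset.sum_eq_single P.natDegree]
  · rw [Nat.sub_self, pow_zero, mul_one, Polynomial.coeff_C]
    simp
  · intro i hi hne
    have hi' : i < P.natDegree := by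
      have := Finset.mem_range.mp hi; omega
    simp [Polynomial.coeff_C_mul, Polynomial.coeff_X_pow, Nat.sub_eq_zero_iff_le,
      not_le.mpr hi']
    omega
  · intro hmem
    exact absurd (Finset.self_mem_range_succ _) hmem

private lemma rev_natDegree_le (P : Polynomial ℤ) (C : ℤ) :
    (rev P C).natDegree ≤ P.natDegree := by
  apply Polynomial.natDegree_sum_le_of_forall_le
  intro i hi
  exact le_trans (Polynomial.natDegree_C_mul_X_pow_le _ _) (Nat.sub_le _ _)

private lemma rev_aeval (P : Polynomial ℤ) (C : ℤ) (x y : ℂ) (hxy : x * y = (C : ℂ))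
    (hP : Polynomial.aeval x P = 0) : Polynomial.aeval y (rev P C) = 0 := by
  rw [rev, map_sum]
  have hterm : ∀ i ∈ Finset.range (P.natDegree + 1),
      (Polynomial.aeval y) (Polynomial.C (P.coeff i * C ^ i) * Polynomial.X ^ (P.natDegree - i))
        = ((P.coeff i : ℂ) * x ^ i) * y ^ P.natDegree := by
    intro i hi
    have hile : i ≤ P.natDegree := Nat.lt_succ_iff.mp (Finset.mem_range.mp hi)
    have hyy : (y : ℂ) ^ i * y ^ (P.natDegree - i) = y ^ P.natDegree := by
      rw [← pow_add]
      congr 1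
      omega
    have key : (C : ℂ) ^ i * y ^ (P.natDegree - i) = x ^ i * y ^ P.natDegree := by
      rw [← hxy, mul_pow, mul_assoc, hyy]
    simp only [map_mul, map_pow, Polynomial.aeval_C, Polynomial.aeval_X, map_intCast, eq_intCast]
    rw [mul_assoc, key, ← mul_assoc]
  rw [Finset.sum_congr rfl hterm, ← Finset.sum_mul]
  have : (∑ i ∈ Finset.range (P.natDegree + 1), (P.coeff i : ℂ) * x ^ i) = Polynomial.aeval x P := by
    rw [Polynomial.aeval_eq_sum_range]
    apply Finset.sum_congr rfl
    intro i _
    rw [zsmul_eq_mul]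
  rw [this, hP, zero_mul]

private lemma minpoly_int_coeff_zero_ne_zero (β : ℂ) (hβ : IsIntegral ℤ β) (hβ0 : β ≠ 0) :
    (minpoly ℤ β).coeff 0 ≠ 0 := by
  intro h0
  obtain ⟨q, hq⟩ := Polynomial.X_dvd_iff.mpr h0
  have hq0 : q ≠ 0 := by
    intro h; rw [h, mul_zero] at hq; exact minpoly.ne_zero hβ hq
  have haq : Polynomial.aeval β q = 0 := by
    have := minpoly.aeval ℤ β
    rw [hq, map_mul, Polynomial.aeval_X] at this
    exact (mul_eq_zero.mp this).resolve_left hβ0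
  have hdvd : minpoly ℤ β ∣ q := minpoly.isIntegrallyClosed_dvd hβ haq
  have h1 : (minpoly ℤ β).natDegree ≤ q.natDegree := Polynomial.natDegree_le_of_dvd hdvd hq0
  have h2 : (minpoly ℤ β).natDegree = 1 + q.natDegree := by
    rw [hq, Polynomial.natDegree_mul Polynomial.X_ne_zero hq0, Polynomial.natDegree_X]
  omega

private lemma coeff_zero_dvd_pow (β : ℂ) (hβ : IsIntegral ℤ β) (hβ0 : β ≠ 0)
    (C : ℤ) (hC : C ≠ 0) (t : ℂ) (ht : IsIntegral ℤ t) (htC : β * t = (C : ℂ)) :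
    (minpoly ℤ β).coeff 0 ∣ C ^ (minpoly ℤ β).natDegree := by
  set p := minpoly ℤ β with hp
  set Q := minpoly ℤ t with hQ
  have ht0 : t ≠ 0 := by
    intro h; rw [h, mul_zero] at htC; exact hC (by exact_mod_cast htC.symm)
  -- p* = rev p C vanishes at t, so Q ∣ p*
  have hpstar0 : Polynomial.aeval t (rev p C) = 0 :=
    rev_aeval p C β t htC (minpoly.aeval ℤ β)
  have hQdvd : Q ∣ rev p C := minpoly.isIntegrallyClosed_dvd ht hpstar0
  have hrevne : rev p C ≠ 0 := by
    intro h
    have := rev_coeff_zero p C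
    rw [h] at this
    simp only [Polynomial.coeff_zero] at this
    rw [(minpoly.monic hβ).coeff_natDegree, one_mul] at this
    exact pow_ne_zero _ hC this.symm
  have hed : Q.natDegree ≤ p.natDegree :=
    le_trans (Polynomial.natDegree_le_of_dvd hQdvd hrevne) (rev_natDegree_le p C)
  -- Q* = rev Q C vanishes at β, so p ∣ Q*
  have hQstar0 : Polynomial.aeval β (rev Q C) = 0 :=
    rev_aeval Q C t β (by rw [mul_comm]; exact htC) (minpoly.aeval ℤ t)
  have hpdvd : p ∣ rev Q C := minpoly.isIntegrallyClosed_dvd hβ hQstar0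
  obtain ⟨Spoly, hS⟩ := hpdvd
  have hcoeff : C ^ Q.natDegree = p.coeff 0 * Spoly.coeff 0 := by
    have := rev_coeff_zero Q C
    rw [hS] at this
    rw [(minpoly.monic ht).coeff_natDegree, one_mul] at this
    rw [← this, Polynomial.mul_coeff_zero]
  have h1 : p.coeff 0 ∣ C ^ Q.natDegree := ⟨Spoly.coeff 0, hcoeff⟩
  exact dvd_trans h1 (pow_dvd_pow C hed)


private lemma periodicPoint_isIntegral (n : ℕ) (hn : 2 ≤ n) (b : ℂ) (hb : IsIntegral ℤ b)
    (g : ℂ → ℂ) (hg : g = fun z : ℂ => (z ^ n + b) / n)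
    (z : ℂ) (h : ℕ) (hh : 1 ≤ h) (hz : g^[h] z = z) : IsIntegral ℤ z := by
  set S := integralClosure ℤ ℂ with hS
  have hn0 : (n : ℂ) ≠ 0 := Nat.cast_ne_zero.mpr (by omega)
  have hstep : ∀ u : ℂ, (n : ℂ) * g u = u ^ n + b := by
    intro u
    rw [hg]
    field_simp
  have key : ∀ j : ℕ, ∃ (c : ℕ) (p : Polynomial S), p.Monic ∧ p.natDegree = n ^ j ∧
      Polynomial.aeval z p = (n : ℂ) ^ c * g^[j] z := by
    intro j
    induction j with
    | zero =>
      refine ⟨0, Polynomial.X, Polynomial.monic_X, by simp, by simp⟩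
    | succ j ih =>
      obtain ⟨c, p, hmon, hdeg, heval⟩ := ih
      refine ⟨n * c + 1, p ^ n + Polynomial.C ((n : S) ^ (n * c) * ⟨b, hb⟩), ?_, ?_, ?_⟩
      · apply Polynomial.Monic.add_of_left (hmon.pow n)
        apply lt_of_le_of_lt (Polynomial.degree_C_le)
        rw [← Polynomial.natDegree_pos_iff_degree_pos, hmon.natDegree_pow, hdeg]
        positivity
      · rw [Polynomial.natDegree_add_C, hmon.natDegree_pow, hdeg, pow_succ]
        ring
      · rw [map_add, map_pow, heval, Polynomial.aeval_C]
        have hcast : ((algebraMap S ℂ) ((n : S) ^ (n * c) * ⟨b, hb⟩)) = (n : ℂ) ^ (n * c) * b := by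
          push_cast
          rfl
        rw [hcast, Function.iterate_succ_apply']
        have h2 : (n : ℂ) ^ (n * c + 1) * g (g^[j] z) = (n : ℂ) ^ (n * c) * ((g^[j] z) ^ n + b) := by
          rw [pow_succ, mul_assoc, hstep]
        rw [h2, mul_pow, ← pow_mul, Nat.mul_comm c n]
        ring
  obtain ⟨c, p, hmon, hdeg, heval⟩ := key h
  have hzint : IsIntegral S z := by
    refine ⟨p - Polynomial.C ((n : S) ^ c) * Polynomial.X, ?_, ?_⟩
    · rw [sub_eq_add_neg]
      apply Polynomial.Monic.add_of_left hmon
      rw [Polynomial.degree_neg]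
      apply lt_of_le_of_lt (Polynomial.degree_mul_le _ _)
      apply lt_of_le_of_lt (add_le_add Polynomial.degree_C_le Polynomial.degree_X_le)
      rw [Polynomial.degree_eq_natDegree hmon.ne_zero, hdeg]
      rw [zero_add]
      exact_mod_cast Nat.one_lt_pow (by omega) (by omega)
    · rw [← Polynomial.aeval_def]
      rw [map_sub, heval, map_mul, Polynomial.aeval_C, Polynomial.aeval_X, hz]
      have : ((algebraMap S ℂ) ((n : S) ^ c)) = (n : ℂ) ^ c := by push_cast; rfl
      rw [this, sub_self]
  exact isIntegral_trans z hzint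


private lemma prod_add_dvd {R : Type*} [CommRing R] (s : Finset ℕ) (f : ℕ → R) (b : R) :
    b ∣ (∏ i ∈ s, (f i + b)) - ∏ i ∈ s, f i := by
  classical
  induction s using Finset.induction_on with
  | empty => simp
  | insert a s' hx ih =>
    rw [Finset.prod_insert hx, Finset.prod_insert hx]
    have : (f a + b) * ∏ i ∈ s', (f i + b) - f a * ∏ i ∈ s', f i
        = f a * ((∏ i ∈ s', (f i + b)) - ∏ i ∈ s', f i) + b * ∏ i ∈ s', (f i + b) := by
      ring
    rw [this]
    exact dvd_add (ih.mul_left _) (Dvd.intro _ rfl)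

private lemma prod_periodic_pow {M : Type*} [CommMonoid M] (f : ℕ → M) (h : ℕ)
    (hf : ∀ j, f (j + h) = f j) (m : ℕ) :
    ∏ j ∈ Finset.range (h * m), f j = (∏ j ∈ Finset.range h, f j) ^ m := by
  have hf' : ∀ k j, f (h * k + j) = f j := by
    intro k
    induction k with
    | zero => simp
    | succ k ih =>
      intro j
      have : h * (k + 1) + j = (h * k + j) + h := by ring
      rw [this, hf, ih]
  induction m with
  | zero => simp
  | succ m ih =>
    rw [Nat.mul_succ, Finset.prod_range_add, ih, pow_succ]
    congr 1
    exact Finset.prod_congr rfl fun i _ => hf' m i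

theorem stmt10 (n : ℕ) (hn : 2 ≤ n) (b : ℂ) (hb0 : b ≠ 0) (hb : IsIntegral ℤ b)
    (g : ℂ → ℂ) (hg : g = fun z : ℂ => (z ^ n + b) / n)
    (w : ℂ) (h : ℕ) (hh : 1 ≤ h) (hper : g^[h] w = w)
    (μ : ℂ) (hμ : μ = ∏ j ∈ Finset.range h, (g^[j] w) ^ (n - 1))
    (m : ℕ) (hm : 1 ≤ m) (hprim : IsPrimitiveRoot μ m)
    (r : ℕ) (hr : r = h * m)
    (dh : ℕ) (hd : dh = (minpoly ℤ (b ^ (n - 1))).natDegree) :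
    (minpoly ℤ (b ^ (n - 1))).coeff 0 ∣ ((n : ℤ) ^ r - 1) ^ ((n - 1) * dh) := by
  have hn0 : (n : ℂ) ≠ 0 := Nat.cast_ne_zero.mpr (by omega)
  have hstep : ∀ u : ℂ, (n : ℂ) * g u = u ^ n + b := by
    intro u; rw [hg]; field_simp
  have hperiodic : ∀ j, g^[j + h] w = g^[j] w := by
    intro j; rw [Function.iterate_add_apply, hper]
  have hfix : ∀ j, g^[h] (g^[j] w) = g^[j] w := by
    intro j
    rw [← Function.iterate_add_apply, Nat.add_comm h j, Function.iterate_add_apply, hper]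
  have hint : ∀ j, IsIntegral ℤ (g^[j] w) := fun j =>
    periodicPoint_isIntegral n hn b hb g hg _ h hh (hfix j)
  -- complex-level facts
  have hμ1 : μ ^ m = 1 := hprim.pow_eq_one
  have hμ0 : μ ≠ 0 := by
    intro h0
    rw [h0, zero_pow (by omega)] at hμ1
    exact zero_ne_one hμ1
  have hw0 : w ≠ 0 := by
    intro h0
    apply hμ0
    rw [hμ]
    apply Finset.prod_eq_zero (Finset.mem_range.mpr (show 0 < h by omega))
    rw [Function.iterate_zero_apply, h0]
    exact zero_pow (by omega)
  have hfr : g^[r] w = w := by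
    have : ∀ k, g^[h * k] w = w := by
      intro k
      induction k with
      | zero => simp
      | succ k ih =>
        rw [Nat.mul_succ, Function.iterate_add_apply, hper, ih]
    rw [hr]; exact this m
  have hCshift : ∏ j ∈ Finset.range r, g^[j + 1] w = ∏ j ∈ Finset.range r, g^[j] w := by
    apply mul_right_cancel₀ hw0
    have e1 := Finset.prod_range_succ' (fun j => g^[j] w) r
    have e2 := Finset.prod_range_succ (fun j => g^[j] w) r
    simp only [Function.iterate_zero_apply] at e1
    rw [← e1, e2, hfr]
  have hCc : (∏ j ∈ Finset.range r, g^[j] w) ^ (n - 1) = 1 := by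
    rw [← Finset.prod_pow, hr]
    rw [prod_periodic_pow (fun j => (g^[j] w) ^ (n - 1)) h (fun j => by show g^[j + h] w ^ (n - 1) = g^[j] w ^ (n - 1); rw [hperiodic j]) m]
    rw [← hμ, hμ1]
  have hCb : ∏ j ∈ Finset.range r, (g^[j] w) ^ n = ∏ j ∈ Finset.range r, g^[j] w := by
    have hn1 : n - 1 + 1 = n := by omega
    calc ∏ j ∈ Finset.range r, (g^[j] w) ^ n
        = ∏ j ∈ Finset.range r, ((g^[j] w) ^ (n - 1) * g^[j] w) := by
          apply Finset.prod_congr rfl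
          intro j _
          rw [← pow_succ, hn1]
      _ = (∏ j ∈ Finset.range r, (g^[j] w) ^ (n - 1)) * ∏ j ∈ Finset.range r, g^[j] w :=
          Finset.prod_mul_distrib
      _ = ∏ j ∈ Finset.range r, g^[j] w := by
          rw [Finset.prod_pow, hCc, one_mul]
  have hCa : ∏ j ∈ Finset.range r, ((g^[j] w) ^ n + b)
      = (n : ℂ) ^ r * ∏ j ∈ Finset.range r, g^[j] w := by
    calc ∏ j ∈ Finset.range r, ((g^[j] w) ^ n + b)
        = ∏ j ∈ Finset.range r, ((n : ℂ) * g^[j + 1] w) := by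
          apply Finset.prod_congr rfl
          intro j _
          rw [Function.iterate_succ_apply', hstep]
      _ = (n : ℂ) ^ r * ∏ j ∈ Finset.range r, g^[j + 1] w := by
          rw [Finset.prod_mul_distrib, Finset.prod_const, Finset.card_range]
      _ = (n : ℂ) ^ r * ∏ j ∈ Finset.range r, g^[j] w := by rw [hCshift]
  -- now in the integral closure
  set S := integralClosure ℤ ℂ with hSdef
  set W : ℕ → S := fun j => ⟨g^[j] w, hint j⟩ with hWdef
  set bS : S := ⟨b, hb⟩ with hbSdef
  set P : S := ∏ j ∈ Finset.range r, W j with hPdef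
  have hcoeprod : ∀ (f : ℕ → S), ((∏ j ∈ Finset.range r, f j : S) : ℂ)
      = ∏ j ∈ Finset.range r, (f j : ℂ) := fun f => map_prod S.val f _
  have hPcoe : (P : ℂ) = ∏ j ∈ Finset.range r, g^[j] w := hcoeprod W
  have hSa : ∏ j ∈ Finset.range r, (W j ^ n + bS) = (n : S) ^ r * P := by
    apply Subtype.ext
    push_cast [hcoeprod, hPcoe]
    exact hCa
  have hSb : ∏ j ∈ Finset.range r, (W j ^ n) = P := by
    apply Subtype.ext
    push_cast [hcoeprod, hPcoe]
    exact hCb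
  have hSc : P ^ (n - 1) = 1 := by
    apply Subtype.ext
    push_cast [hPcoe]
    exact hCc
  have hdvd2 : bS ∣ ((n : S) ^ r - 1) * P := by
    have h0 := prod_add_dvd (Finset.range r) (fun j => W j ^ n) bS
    rw [hSa, hSb] at h0
    have he : (n : S) ^ r * P - P = ((n : S) ^ r - 1) * P := by ring
    rwa [he] at h0
  have hdvd3 : bS ∣ (n : S) ^ r - 1 := by
    have h2 : ((n : S) ^ r - 1) * P * P ^ (n - 2) = (n : S) ^ r - 1 := by
      rw [mul_assoc, ← pow_succ']
      have he : n - 2 + 1 = n - 1 := by omega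
      rw [he, hSc, mul_one]
    exact h2 ▸ hdvd2.mul_right _
  obtain ⟨tS, htS⟩ := pow_dvd_pow_of_dvd hdvd3 (n - 1)
  have htSC : ((n : ℂ) ^ r - 1) ^ (n - 1) = b ^ (n - 1) * (tS : ℂ) := by
    have := congrArg (fun x : S => (x : ℂ)) htS
    push_cast at this
    exact this
  have hCne : (((n : ℤ) ^ r - 1) ^ (n - 1) : ℤ) ≠ 0 := by
    have h1 : (1 : ℤ) < (n : ℤ) ^ r := by
      apply one_lt_pow₀
      · exact_mod_cast (by omega : 1 < n)
      · rw [hr]; exact Nat.mul_ne_zero (by omega) (by omega)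
    exact pow_ne_zero _ (sub_ne_zero.mpr (ne_of_gt h1))
  have hfinal := coeff_zero_dvd_pow (b ^ (n - 1)) (hb.pow _) (pow_ne_zero _ hb0)
    (((n : ℤ) ^ r - 1) ^ (n - 1)) hCne (tS : ℂ) tS.2 ?_
  · rw [hd, pow_mul]
    exact hfinal
  · rw [← htSC]
    push_cast
    ring
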